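/- Let $0 < a < b$. Define $\mathscr{G} = \sqrt{ab}$, $\mathscr{A} = \frac{a+b}{2}$, and $\mathscr{L} = \frac{b-a}{\ln b - \ln a}$. Then $0 \le \mathscr{L} - \mathscr{G} \le \min\left\{ \frac{\mathscr{G}\mathscr{L}(b-a)}{a^2}\left[\frac{1}{4} + \left(\frac{\mathscr{G}-\mathscr{A}}{b-a}\right)^2\right],\ \frac{\mathscr{G}-a}{2a^2}\,\mathscr{G}\mathscr{L} \right\}$. -/

import Mathlib

lemma L1 {s : ℝ} (hs : 1 ≤ s) : 2 * Real.log s ≤ s - 1/s := by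
  have hs0 : 0 < s := lt_of_lt_of_le one_pos hs
  rcases eq_or_lt_of_le hs with h | h
  · simp [← h]
  · have hy : 0 < Real.log s := Real.log_pos h
    have hsinh := (Real.self_lt_sinh_iff).mpr hy
    have he : Real.sinh (Real.log s) = (s - 1/s) / 2 := by
      rw [Real.sinh_eq, Real.exp_neg, Real.exp_log hs0]
      ring_nf
    nlinarith [hsinh, he]

lemma L2 {s : ℝ} (hs : 1 ≤ s) : s - 1/s - 2 * Real.log s ≤ (s-1)^2 / s := by
  have hs0 : 0 < s := lt_of_lt_of_le one_pos hs
  have hlog : 1 - s⁻¹ ≤ Real.log s := Real.one_sub_inv_le_log_of_pos hs0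
  have h2 : (s-1)^2 / s = s + 1/s - 2 := by field_simp; ring
  rw [h2]
  have h3 : (1:ℝ)/s = s⁻¹ := one_div s
  nlinarith [hlog]

set_option maxHeartbeats 1000000 in
theorem log_sub_geom_mean_bound (a b : ℝ) (ha : 0 < a) (hab : a < b) :
    0 ≤ (b - a) / (Real.log b - Real.log a) - Real.sqrt (a * b) ∧
    (b - a) / (Real.log b - Real.log a) - Real.sqrt (a * b) ≤
      min
        (Real.sqrt (a * b) * ((b - a) / (Real.log b - Real.log a)) * (b - a) / a ^ 2 *
          (1 / 4 + ((Real.sqrt (a * b) - (a + b) / 2) / (b - a)) ^ 2))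
        ((Real.sqrt (a * b) - a) / (2 * a ^ 2) *
          (Real.sqrt (a * b) * ((b - a) / (Real.log b - Real.log a)))) := by
  have hb : 0 < b := lt_trans ha hab
  have hba : 0 < b - a := sub_pos.mpr hab
  set ua := Real.sqrt a with hua_def
  set ub := Real.sqrt b with hub_def
  have hua : 0 < ua := Real.sqrt_pos.mpr ha
  have hub : 0 < ub := Real.sqrt_pos.mpr hb
  have hua2 : ua^2 = a := Real.sq_sqrt ha.le
  have hub2 : ub^2 = b := Real.sq_sqrt hb.le
  have huab : ua < ub := Real.sqrt_lt_sqrt ha.le hab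
  have hgdef : Real.sqrt (a*b) = ua*ub := Real.sqrt_mul ha.le b
  set g := ua*ub with hg_def
  rw [hgdef]
  have hg0 : 0 < g := mul_pos hua hub
  have hgab : g^2 = a*b := by rw [hg_def]; nlinarith [hua2, hub2]
  have hag : a < g := by nlinarith
  have hgb : g < b := by nlinarith
  have hs1 : 1 < ub/ua := (one_lt_div hua).mpr huab
  set x := Real.log b - Real.log a with hx_def
  have hlogs : x = 2 * Real.log (ub/ua) := by
    rw [hx_def, Real.log_div (ne_of_gt hub) (ne_of_gt hua), hua_def, hub_def,
      Real.log_sqrt ha.le, Real.log_sqrt hb.le]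
    ring
  have hx : 0 < x := by
    rw [hlogs]; have := Real.log_pos hs1; linarith
  set L := (b-a)/x with hL_def
  have hLx : L * x = b - a := div_mul_cancel₀ _ (ne_of_gt hx)
  have hL0 : 0 < L := div_pos hba hx
  have l1 := L1 hs1.le
  have l2 := L2 hs1.le
  -- F1 : g * x ≤ b - a
  have hF1 : g * x ≤ b - a := by
    rw [hlogs]
    have h := mul_le_mul_of_nonneg_left l1 hg0.le
    have e : g * ((ub/ua) - 1/(ub/ua)) = b - a := by
      rw [hg_def, ← hua2, ← hub2]; field_simp
    calc g * (2 * Real.log (ub/ua)) ≤ g * ((ub/ua) - 1/(ub/ua)) := h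
      _ = b - a := e
  -- F2 : scaled version of L2
  have hF2 : 2*a^2*(b-a) - 2*a^2*g*x ≤ 2*a^2*(a + b - 2*g) := by
    rw [hlogs]
    have hc : (0:ℝ) ≤ 2*a^2*g := by positivity
    have h := mul_le_mul_of_nonneg_left l2 hc
    have e0 : 2*a^2*g*((ub/ua) - 1/(ub/ua)) = 2*a^2*(b-a) := by
      rw [hg_def, ← hua2, ← hub2]; field_simp
    have e2 : 2*a^2*g*(((ub/ua)-1)^2/(ub/ua)) = 2*a^2*(a + b - 2*g) := by
      rw [hg_def, ← hua2, ← hub2]; field_simp; ring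
    have hrw : 2*a^2*g*((ub/ua) - 1/(ub/ua) - 2*Real.log (ub/ua))
        = 2*a^2*g*((ub/ua) - 1/(ub/ua)) - 2*a^2*g*(2*Real.log (ub/ua)) := by ring
    linarith [h, hrw ▸ h]
  -- part 1
  have part1 : 0 ≤ L - g := by
    have : g ≤ L := (le_div_iff₀ hx).mpr hF1
    linarith
  -- bound2 core
  have aux : 2*a^2*(a + b - 2*g) ≤ (g-a)*g*(b-a) := by
    have idA : a*((g-a)*g*(b-a) - 2*a^2*(a + b - 2*g))
        = (g-a)^3*(g+2*a) + (a*b - g^2)*(g*(g-a) - 2*a^2) := by ring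
    have h1 : (0:ℝ) ≤ (g-a)^3*(g+2*a) := by
      have : (0:ℝ) ≤ g - a := by linarith
      positivity
    have h2 : 0 ≤ a * ((g-a)*g*(b-a) - 2*a^2*(a + b - 2*g)) := by
      rw [idA, hgab, sub_self, zero_mul, add_zero]; exact h1
    nlinarith [h2, ha]
  have hP : (L-g)*(2*a^2)*x ≤ (g-a)*(g*L)*x := by
    have e1 : (L-g)*(2*a^2)*x = 2*a^2*(b-a) - 2*a^2*g*x := by rw [← hLx]; ring
    have e2 : (g-a)*(g*L)*x = (g-a)*g*(b-a) := by rw [← hLx]; ring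
    rw [e1, e2]; linarith [hF2, aux]
  have hbound2 : L - g ≤ (g-a)/(2*a^2)*(g*L) := by
    have h := le_of_mul_le_mul_right hP hx
    rw [div_mul_eq_mul_div, le_div_iff₀ (by positivity : (0:ℝ) < 2*a^2)]
    linarith [h]
  refine ⟨part1, le_min ?_ ?_⟩
  · -- bound1, via bound2 ≤ bound1
    have hQ : 2*(g-a)*(b-a) ≤ (b-a)^2 + (a+b-2*g)^2 := by
      have hgA : 2*g ≤ a + b := by nlinarith [sq_nonneg (ua-ub), hua2, hub2]
      nlinarith [sq_nonneg (a+b-2*g), mul_nonneg (by linarith : (0:ℝ) ≤ a+b-2*g) hba.le]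
    have inner : (g-a)/(2*a^2) ≤ (b-a)/a^2 * (1/4 + ((g-(a+b)/2)/(b-a))^2) := by
      have e : (b-a)/a^2 * (1/4 + ((g-(a+b)/2)/(b-a))^2)
          = ((b-a)^2 + (a+b-2*g)^2) / (4*a^2*(b-a)) := by
        field_simp
        ring
      have e2 : (g-a)/(2*a^2) = (2*(g-a)*(b-a))/(4*a^2*(b-a)) := by
        field_simp
        ring
      rw [e, e2]
      exact (div_le_div_iff_of_pos_right (by positivity)).mpr hQ
    have hgL : (0:ℝ) ≤ g*L := by positivity
    have h := mul_le_mul_of_nonneg_left inner hgL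
    calc L - g ≤ (g-a)/(2*a^2) * (g*L) := hbound2
      _ = g*L * ((g-a)/(2*a^2)) := by ring
      _ ≤ g*L * ((b-a)/a^2 * (1/4 + ((g-(a+b)/2)/(b-a))^2)) := h
      _ = g * L * (b-a)/a^2 * (1/4 + ((g-(a+b)/2)/(b-a))^2) := by ring
  · exact hbound2
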